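/- With ψ(t,μ) the piecewise smoothing function (0 for t ≤ 0; t²/(2μ) for 0 < t ≤ μ; (1/4)(t-μ)² + t - μ/2 for μ < t ≤ μ+√μ; -(1/4)(t-μ-2√μ)² + t for μ+√μ < t ≤ μ+2√μ; t for t > μ+2√μ), for each fixed μ ∈ (0,1] the function t ↦ ψ(t,μ) is continuously differentiable on ℝ, with ∂ψ/∂t = 0 for t ≤ 0, ∂ψ/∂t = 1 for t ≥ μ + 2√μ, and 0 ≤ ∂ψ/∂t ≤ 1 + √μ/2 for 0 < t < μ + 2√μ. -/

import Mathlib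

/-- The piecewise smoothing function of `max{t,0}` from equation (3.8) of the paper. -/
noncomputable def psi (μ t : ℝ) : ℝ :=
  if t ≤ 0 then 0
  else if t ≤ μ then t ^ 2 / (2 * μ)
  else if t ≤ μ + Real.sqrt μ then (1 / 4) * (t - μ) ^ 2 + t - μ / 2
  else if t ≤ μ + 2 * Real.sqrt μ then -(1 / 4) * (t - μ - 2 * Real.sqrt μ) ^ 2 + t
  else t

private lemma glue {f : ℝ → ℝ} {a f' : ℝ} (h1 : HasDerivWithinAt f f' (Set.Iic a) a)
    (h2 : HasDerivWithinAt f f' (Set.Ici a) a) : HasDerivAt f f' a := by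
  have h := h1.union h2
  rw [Set.Iic_union_Ici] at h
  exact hasDerivWithinAt_univ.mp h

private lemma left_piece {f g : ℝ → ℝ} {a b f' : ℝ} (hba : b < a) (hg : HasDerivAt g f' a)
    (heq : ∀ t, b < t → t ≤ a → f t = g t) : HasDerivWithinAt f f' (Set.Iic a) a := by
  refine (hg.hasDerivWithinAt).congr_of_eventuallyEq ?_ (heq a hba le_rfl)
  filter_upwards [self_mem_nhdsWithin,
    (nhdsWithin_le_nhds (Ioi_mem_nhds hba) : Set.Ioi b ∈ nhdsWithin a (Set.Iic a))] with t ht1 ht2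
  exact heq t ht2 ht1

private lemma right_piece {f g : ℝ → ℝ} {a b f' : ℝ} (hab : a < b) (hg : HasDerivAt g f' a)
    (heq : ∀ t, a ≤ t → t < b → f t = g t) : HasDerivWithinAt f f' (Set.Ici a) a := by
  refine (hg.hasDerivWithinAt).congr_of_eventuallyEq ?_ (heq a le_rfl hab)
  filter_upwards [self_mem_nhdsWithin,
    (nhdsWithin_le_nhds (Iio_mem_nhds hab) : Set.Iio b ∈ nhdsWithin a (Set.Ici a))] with t ht1 ht2
  exact heq t ht1 ht2

private lemma interior_piece {f g : ℝ → ℝ} {a b x f' : ℝ} (hax : a < x) (hxb : x < b)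
    (hg : HasDerivAt g f' x) (heq : ∀ t, a < t → t < b → f t = g t) : HasDerivAt f f' x := by
  apply hg.congr_of_eventuallyEq
  filter_upwards [Ioo_mem_nhds hax hxb] with t ht
  exact heq t ht.1 ht.2

/-- for fixed `μ ∈ (0,1]`, `ψ(·,μ)` is continuously differentiable on `ℝ`
with `ψ' = 0` for `t ≤ 0`, `ψ' = 1` for `t ≥ μ + 2√μ`, and
`0 ≤ ψ' ≤ 1 + √μ/2` for `0 < t < μ + 2√μ`. -/
theorem stmt11 (μ : ℝ) (hμ : μ ∈ Set.Ioc (0 : ℝ) 1) :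
    ContDiff ℝ 1 (psi μ) ∧
    (∀ t : ℝ, t ≤ 0 → deriv (psi μ) t = 0) ∧
    (∀ t : ℝ, μ + 2 * Real.sqrt μ ≤ t → deriv (psi μ) t = 1) ∧
    ∀ t : ℝ, 0 < t → t < μ + 2 * Real.sqrt μ →
      deriv (psi μ) t ∈ Set.Icc (0 : ℝ) (1 + Real.sqrt μ / 2) := by
  obtain ⟨hμ0, hμ1⟩ := hμ
  set s : ℝ := Real.sqrt μ with hs_def
  have hs : 0 < s := Real.sqrt_pos.mpr hμ0
  have hss : s * s = μ := Real.mul_self_sqrt hμ0.le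
  -- the explicit derivative
  set φ : ℝ → ℝ := fun t =>
    if t ≤ 0 then 0
    else if t ≤ μ then t / μ
    else if t ≤ μ + s then (t - μ) / 2 + 1
    else if t ≤ μ + 2 * s then -(t - μ - 2 * s) / 2 + 1
    else 1 with hφ_def
  -- values of psi on the (closed) pieces
  have hpsi0 : ∀ t : ℝ, t ≤ 0 → psi μ t = 0 := by
    intro t ht; simp [psi, ht]
  have hpsi1 : ∀ t : ℝ, 0 ≤ t → t ≤ μ → psi μ t = t ^ 2 / (2 * μ) := by
    intro t h0 h1
    rcases eq_or_lt_of_le h0 with h | h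
    · rw [hpsi0 t h.symm.le, ← h]; simp
    · simp [psi, not_le.mpr h, h1]
  have hpsi2 : ∀ t : ℝ, μ ≤ t → t ≤ μ + s → psi μ t = (1 / 4) * (t - μ) ^ 2 + t - μ / 2 := by
    intro t h0 h1
    rcases eq_or_lt_of_le h0 with h | h
    · rw [hpsi1 t (h ▸ hμ0.le) h.symm.le, ← h]
      field_simp
      ring
    · have : ¬ t ≤ 0 := not_le.mpr (lt_trans hμ0 h)
      simp [psi, this, not_le.mpr h, h1, ← hs_def]
  have hpsi3 : ∀ t : ℝ, μ + s ≤ t → t ≤ μ + 2 * s →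
      psi μ t = -(1 / 4) * (t - μ - 2 * s) ^ 2 + t := by
    intro t h0 h1
    rcases eq_or_lt_of_le h0 with h | h
    · rw [hpsi2 t (by linarith) h.symm.le, ← h]
      have : μ + s - μ = s := by ring
      nlinarith [hss]
    · have h2 : μ < t := by linarith
      have h3 : ¬ t ≤ 0 := not_le.mpr (lt_trans hμ0 h2)
      simp [psi, h3, not_le.mpr h2, not_le.mpr h, h1, ← hs_def]
  have hpsi4 : ∀ t : ℝ, μ + 2 * s ≤ t → psi μ t = t := by
    intro t h0
    rcases eq_or_lt_of_le h0 with h | h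
    · rw [hpsi3 t (by linarith) h.symm.le, ← h]
      ring
    · have h2 : μ < t := by linarith
      have h3 : μ + s < t := by linarith
      have h4 : ¬ t ≤ 0 := not_le.mpr (lt_trans hμ0 h2)
      simp [psi, h4, not_le.mpr h2, not_le.mpr h3, not_le.mpr h, ← hs_def]
  -- derivatives of the pieces
  have hd1 : ∀ x : ℝ, HasDerivAt (fun t : ℝ => t ^ 2 / (2 * μ)) (x / μ) x := by
    intro x
    have h := (hasDerivAt_pow 2 x).div_const (2 * μ)
    refine h.congr_deriv ?_
    rw [div_eq_div_iff (by positivity) hμ0.ne']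
    norm_num
    ring
  have hd2 : ∀ x : ℝ, HasDerivAt (fun t : ℝ => (1 / 4) * (t - μ) ^ 2 + t - μ / 2)
      ((x - μ) / 2 + 1) x := by
    intro x
    have h := (((((hasDerivAt_id x).sub_const μ).pow 2).const_mul (1/4 : ℝ)).add
      (hasDerivAt_id x)).sub_const (μ / 2)
    refine h.congr_deriv ?_
    norm_num
    ring
  have hd3 : ∀ x : ℝ, HasDerivAt (fun t : ℝ => -(1 / 4) * (t - μ - 2 * s) ^ 2 + t)
      (-(x - μ - 2 * s) / 2 + 1) x := by
    intro x
    have h := (((((hasDerivAt_id x).sub_const μ).sub_const (2*s)).pow 2).const_mul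
      (-(1/4) : ℝ)).add (hasDerivAt_id x)
    refine h.congr_deriv ?_
    norm_num
    ring
  -- values of φ on the pieces
  have hφ0 : ∀ t : ℝ, t ≤ 0 → φ t = 0 := by
    intro t ht; simp [hφ_def, ht]
  have hφ1 : ∀ t : ℝ, 0 < t → t ≤ μ → φ t = t / μ := by
    intro t h0 h1; simp [hφ_def, not_le.mpr h0, h1]
  have hφ2 : ∀ t : ℝ, μ < t → t ≤ μ + s → φ t = (t - μ) / 2 + 1 := by
    intro t h0 h1
    simp [hφ_def, not_le.mpr (lt_trans hμ0 h0), not_le.mpr h0, h1]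
  have hφ3 : ∀ t : ℝ, μ + s < t → t ≤ μ + 2 * s → φ t = -(t - μ - 2 * s) / 2 + 1 := by
    intro t h0 h1
    have h2 : μ < t := by linarith
    simp [hφ_def, not_le.mpr (lt_trans hμ0 h2), not_le.mpr h2, not_le.mpr h0, h1]
  have hφ4 : ∀ t : ℝ, μ + 2 * s ≤ t → φ t = 1 := by
    intro t h1
    rcases eq_or_lt_of_le h1 with h | h
    · rw [hφ3 t (by linarith) h.symm.le, ← h]; ring
    · have h2 : μ < t := by linarith
      have h3 : μ + s < t := by linarith
      simp [hφ_def, not_le.mpr (lt_trans hμ0 h2), not_le.mpr h2, not_le.mpr h3, not_le.mpr h]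
  -- the key derivative computation
  have key : ∀ t : ℝ, HasDerivAt (psi μ) (φ t) t := by
    intro t
    rcases lt_trichotomy t 0 with ht | ht | ht
    · rw [hφ0 t ht.le]
      exact interior_piece (show t - 1 < t by linarith) ht (hasDerivAt_const t 0)
        (fun u _ hu => hpsi0 u hu.le)
    · subst ht
      rw [hφ0 0 le_rfl]
      refine glue (left_piece (show (-1 : ℝ) < 0 by norm_num) (hasDerivAt_const 0 0)
        (fun u _ hu => hpsi0 u hu)) (right_piece hμ0 ?_ (fun u hu hu' => hpsi1 u hu hu'.le))
      simpa using hd1 0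
    · rcases lt_trichotomy t μ with htμ | htμ | htμ
      · rw [hφ1 t ht htμ.le]
        exact interior_piece ht htμ (hd1 t) (fun u hu hu' => hpsi1 u hu.le hu'.le)
      · subst htμ
        rw [hφ1 t ht le_rfl, div_self (ne_of_gt ht)]
        refine glue (left_piece ht ?_ (fun u hu hu' => hpsi1 u hu.le hu'))
          (right_piece (show t < t + s by linarith) ?_
            (fun u hu hu' => hpsi2 u hu hu'.le))
        · have := hd1 t
          rwa [div_self (ne_of_gt ht)] at this
        · have := hd2 t
          simpa using this
      · rcases lt_trichotomy t (μ + s) with hts | hts | hts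
        · rw [hφ2 t htμ hts.le]
          exact interior_piece htμ hts (hd2 t) (fun u hu hu' => hpsi2 u hu.le hu'.le)
        · subst hts  -- t = μ + s
          rw [hφ2 (μ + s) htμ le_rfl]
          refine glue (left_piece htμ (hd2 (μ + s)) (fun u hu hu' => hpsi2 u hu.le hu'))
            (right_piece (show μ + s < μ + 2 * s by linarith) ?_
              (fun u hu hu' => hpsi3 u hu hu'.le))
          have := hd3 (μ + s)
          convert this using 1
          ring
        · rcases lt_trichotomy t (μ + 2 * s) with ht2 | ht2 | ht2
          · rw [hφ3 t hts ht2.le]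
            exact interior_piece hts ht2 (hd3 t) (fun u hu hu' => hpsi3 u hu.le hu'.le)
          · subst ht2  -- t = μ + 2s
            rw [hφ4 (μ + 2 * s) le_rfl]
            refine glue (left_piece hts ?_ (fun u hu hu' => hpsi3 u hu.le hu'))
              (right_piece (show μ + 2 * s < μ + 2 * s + 1 by linarith) ?_
                (fun u hu _ => hpsi4 u hu))
            · have := hd3 (μ + 2 * s)
              convert this using 1
              ring
            · exact hasDerivAt_id _
          · rw [hφ4 t ht2.le]
            exact interior_piece ht2 (show t < t + 1 by linarith) (hasDerivAt_id t)
              (fun u hu _ => hpsi4 u hu.le)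
  have hderiv : deriv (psi μ) = φ := funext fun t => (key t).deriv
  -- continuity of φ
  have hcont : Continuous φ := by
    rw [hφ_def]
    apply Continuous.if_le _ _ continuous_id continuous_const
    · intro x hx
      simp only [id_eq] at hx
      subst hx
      rw [if_pos hμ0.le]
      simp
    · exact continuous_const
    · apply Continuous.if_le _ _ continuous_id continuous_const
      · intro x hx
        simp only [id_eq] at hx
        rw [hx, if_pos (show μ ≤ μ + s by linarith), div_self (ne_of_gt hμ0)]
        ring
      · exact (continuous_id.div_const μ)
      · apply Continuous.if_le _ _ continuous_id continuous_const
        · intro x hx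
          simp only [id_eq] at hx
          subst hx
          rw [if_pos (show μ + s ≤ μ + 2 * s by linarith)]
          ring
        · exact ((continuous_id.sub continuous_const).div_const 2).add continuous_const
        · apply Continuous.if_le _ _ continuous_id continuous_const
          · intro x hx
            simp only [id_eq] at hx
            subst hx
            ring
          · exact (((continuous_id.sub continuous_const).sub
              continuous_const).neg.div_const 2).add continuous_const
          · exact continuous_const
  refine ⟨?_, ?_, ?_, ?_⟩
  · rw [contDiff_one_iff_deriv]
    exact ⟨fun t => (key t).differentiableAt, hderiv ▸ hcont⟩
  · intro t ht
    rw [hderiv]; exact hφ0 t ht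
  · intro t ht
    rw [hderiv]; exact hφ4 t ht
  · intro t ht0 ht2
    rw [hderiv]
    constructor
    · rcases le_or_gt t μ with h | h
      · rw [hφ1 t ht0 h]; positivity
      · rcases le_or_gt t (μ + s) with h' | h'
        · rw [hφ2 t h h']; nlinarith
        · rw [hφ3 t h' ht2.le]; nlinarith
    · have hs2 : (0:ℝ) ≤ 1 + s / 2 - 1 := by linarith
      rcases le_or_gt t μ with h | h
      · rw [hφ1 t ht0 h]
        have : t / μ ≤ 1 := by
          rw [div_le_one hμ0]; exact h
        linarith
      · rcases le_or_gt t (μ + s) with h' | h'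
        · rw [hφ2 t h h']; nlinarith
        · rw [hφ3 t h' ht2.le]; nlinarith
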